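/- Let φ ∈ 𝒢(ℝⁿ×[0,∞)), s₀, s₁ ∈ C^{log}_loc(ℝⁿ) ∩ L^∞(ℝⁿ), and p₀, p₁ ∈ C^{log}(ℝⁿ) be such that s₁(x) ≤ s₀(x) and s₀(x) − n/p₀(x) = s₁(x) − n/p₁(x) for all x ∈ ℝⁿ. Then the sequence space embedding b^{s₀(·),φ}_{p₀(·),∞}(ℝⁿ) ↪ b^{s₁(·),φ}_{p₁(·),∞}(ℝⁿ) holds, i.e., there is a constant C with ‖t‖_{b^{s₁(·),φ}_{p₁(·),∞}} ≤ C ‖t‖_{b^{s₀(·),φ}_{p₀(·),∞}} for all sequences t = {t_Q}_{Q} indexed by dyadic cubes of side length ≤ 1. -/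

import Mathlib

open MeasureTheory Real FourierTransform
open scoped ENNReal BigOperators Classical

noncomputable section

/-- The dyadic cube `Q_{jk} = 2^{−j}([0,1)ⁿ + k)` in `ℝⁿ`. -/
def dyadicCube {n : ℕ} (j : ℤ) (k : Fin n → ℤ) : Set (EuclideanSpace ℝ (Fin n)) :=
  {x | ∀ i, (2 : ℝ) ^ (-j) * (k i : ℝ) ≤ x i ∧ x i < (2 : ℝ) ^ (-j) * ((k i : ℝ) + 1)}

/-- The lower-left corner `2^{−j} k` of the dyadic cube `Q_{jk}`. -/
def dyadicCorner {n : ℕ} (j : ℤ) (k : Fin n → ℤ) : EuclideanSpace ℝ (Fin n) :=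
  WithLp.toLp 2 (fun i => (2 : ℝ) ^ (-j) * (k i : ℝ))

/-- The variable-exponent modular (real-valued exponent, `ℝ≥0∞`-valued function). -/
def varModularR {n : ℕ} (p : EuclideanSpace ℝ (Fin n) → ℝ)
    (f : EuclideanSpace ℝ (Fin n) → ℝ≥0∞) : ℝ≥0∞ :=
  ∫⁻ x, f x ^ p x

/-- The variable-exponent Lebesgue (Luxemburg) quasi-norm. -/
def varNormR {n : ℕ} (p : EuclideanSpace ℝ (Fin n) → ℝ)
    (f : EuclideanSpace ℝ (Fin n) → ℝ≥0∞) : ℝ≥0∞ :=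
  sInf {lam : ℝ≥0∞ | 0 < lam ∧ varModularR p (fun x => f x / lam) ≤ 1}

/-- The inner infimum of the mixed Lebesgue-sequence semimodular. -/
def mixedInnerR {n : ℕ} (p q : EuclideanSpace ℝ (Fin n) → ℝ)
    (g : EuclideanSpace ℝ (Fin n) → ℝ≥0∞) : ℝ≥0∞ :=
  sInf {mu : ℝ≥0∞ | 0 < mu ∧
    varModularR p (fun x => g x / mu ^ (1 / q x)) ≤ 1}

/-- The mixed Lebesgue-sequence semimodular `ϱ_{ℓ^{q(·)}(L^{p(·)})}`. -/
def mixedModularR {n : ℕ} (p q : EuclideanSpace ℝ (Fin n) → ℝ)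
    (g : ℕ → EuclideanSpace ℝ (Fin n) → ℝ≥0∞) : ℝ≥0∞ :=
  ∑' v, mixedInnerR p q (g v)

/-- The mixed Lebesgue-sequence quasi-norm `‖·‖_{ℓ^{q(·)}(L^{p(·)})}`. -/
def mixedNormR {n : ℕ} (p q : EuclideanSpace ℝ (Fin n) → ℝ)
    (g : ℕ → EuclideanSpace ℝ (Fin n) → ℝ≥0∞) : ℝ≥0∞ :=
  sInf {lam : ℝ≥0∞ | 0 < lam ∧ mixedModularR p q (fun v x => g v x / lam) ≤ 1}

/-- Local log-Hölder continuity with constant `C`. -/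
def LocLogHolderWith {n : ℕ} (C : ℝ) (g : EuclideanSpace ℝ (Fin n) → ℝ) : Prop :=
  ∀ x y : EuclideanSpace ℝ (Fin n), x ≠ y →
    |g x - g y| ≤ C / Real.log (Real.exp 1 + 1 / dist x y)

/-- Global log-Hölder continuity. -/
def GlobLogHolder {n : ℕ} (g : EuclideanSpace ℝ (Fin n) → ℝ) : Prop :=
  (∃ C : ℝ, 0 < C ∧ LocLogHolderWith C g) ∧
    ∃ Cinf : ℝ, 0 < Cinf ∧ ∃ ginf : ℝ,
      ∀ x : EuclideanSpace ℝ (Fin n), |g x - ginf| ≤ Cinf / Real.log (Real.exp 1 + ‖x‖)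

/-- `φ ∈ 𝒢(ℝⁿ×[0,∞))`: positivity, doubling (constant `c₁`) and compatibility
(constant `c₂`). -/
def IsGWeight {n : ℕ} (φ : EuclideanSpace ℝ (Fin n) → ℝ → ℝ) (c₁ c₂ : ℝ) : Prop :=
  1 ≤ c₁ ∧ 1 ≤ c₂ ∧ (∀ x r, 0 < r → 0 < φ x r) ∧
    (∀ x r, 0 < r → c₁⁻¹ * φ x (2 * r) ≤ φ x r ∧ φ x r ≤ c₁ * φ x (2 * r)) ∧
    (∀ x y : EuclideanSpace ℝ (Fin n), ∀ r, 0 < r → dist x y ≤ r →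
      c₂⁻¹ * φ y r ≤ φ x r ∧ φ x r ≤ c₂ * φ y r)

/-- The value `φ(P)` of a weight on the dyadic cube `P = Q_{JK}`. -/
def weightOn {n : ℕ} (φ : EuclideanSpace ℝ (Fin n) → ℝ → ℝ)
    (J : ℤ) (K : Fin n → ℤ) : ℝ :=
  φ (dyadicCorner J K) ((2 : ℝ) ^ (-J))

/-- The `j`-th level function of the sequence space `b^{s(·),φ}_{p(·),q(·)}`
localized to the dyadic cube `P = Q_{JK}`: `Σ_{Q ⊂ P, ℓ(Q)=2^{−ℓ}}
|Q|^{−s(·)/n} |t_Q| |Q|^{−1/2} χ_Q = Σ 2^{ℓ(s(·)+n/2)} |t_Q| χ_Q`. -/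
def seqLevelFn {n : ℕ} (s : EuclideanSpace ℝ (Fin n) → ℝ)
    (t : ℕ → (Fin n → ℤ) → ℝ≥0∞) (J : ℤ) (K : Fin n → ℤ) (ℓ : ℕ) :
    EuclideanSpace ℝ (Fin n) → ℝ≥0∞ :=
  Set.indicator (dyadicCube J K) (fun x =>
    ∑' k : Fin n → ℤ,
      if x ∈ dyadicCube (ℓ : ℤ) k ∧ dyadicCube (ℓ : ℤ) k ⊆ dyadicCube J K then
        ENNReal.ofReal ((2 : ℝ) ^ ((ℓ : ℝ) * (s x + n / 2))) * t ℓ k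
      else 0)

/-- The norm of the Besov-type sequence space `b^{s(·),φ}_{p(·),q(·)}(ℝⁿ)`:
sequences are indexed by dyadic cubes of side length `≤ 1`, encoded as pairs
`(ℓ, k)` with level `ℓ ∈ ℕ` (side length `2^{−ℓ}`) and corner `k ∈ ℤⁿ`. -/
def seqBesovNorm {n : ℕ} (p q s : EuclideanSpace ℝ (Fin n) → ℝ)
    (φ : EuclideanSpace ℝ (Fin n) → ℝ → ℝ)
    (t : ℕ → (Fin n → ℤ) → ℝ≥0∞) : ℝ≥0∞ :=
  ⨆ (J : ℤ) (K : Fin n → ℤ),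
    (ENNReal.ofReal (weightOn φ J K))⁻¹ *
      mixedNormR p q (fun m => seqLevelFn s t J K ((max J 0).toNat + m))

/-- The norm of the Besov-type sequence space `b^{s(·),φ}_{p(·),∞}(ℝⁿ)`. -/
def seqBesovNormInf {n : ℕ} (p s : EuclideanSpace ℝ (Fin n) → ℝ)
    (φ : EuclideanSpace ℝ (Fin n) → ℝ → ℝ)
    (t : ℕ → (Fin n → ℤ) → ℝ≥0∞) : ℝ≥0∞ :=
  ⨆ (J : ℤ) (K : Fin n → ℤ),
    (ENNReal.ofReal (weightOn φ J K))⁻¹ *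
      ⨆ m : ℕ, varNormR p (seqLevelFn s t J K ((max J 0).toNat + m))

lemma mem_dyadicCube_iff {n : ℕ} (j : ℤ) (k : Fin n → ℤ) (x : EuclideanSpace ℝ (Fin n)) :
    x ∈ dyadicCube j k ↔ ∀ i, (k i : ℝ) ≤ (2:ℝ)^j * x i ∧ (2:ℝ)^j * x i < k i + 1 := by
  have hc : (0:ℝ) < (2:ℝ)^j := zpow_pos (by norm_num) j
  constructor
  · intro h i
    obtain ⟨h1, h2⟩ := h i
    rw [zpow_neg] at h1 h2
    constructor
    · have := mul_le_mul_of_nonneg_left h1 hc.le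
      rw [← mul_assoc, mul_inv_cancel₀ hc.ne', one_mul] at this
      linarith
    · have := mul_lt_mul_of_pos_left h2 hc
      rw [← mul_assoc, mul_inv_cancel₀ hc.ne', one_mul] at this
      linarith
  · intro h i
    obtain ⟨h1, h2⟩ := h i
    rw [zpow_neg]
    constructor
    · have := mul_le_mul_of_nonneg_left h1 (inv_pos.mpr hc).le
      rw [← mul_assoc, inv_mul_cancel₀ hc.ne', one_mul] at this
      linarith
    · have := mul_lt_mul_of_pos_left h2 (inv_pos.mpr hc)
      rw [← mul_assoc, inv_mul_cancel₀ hc.ne', one_mul] at this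
      linarith

lemma dyadicCube_unique {n : ℕ} {j : ℤ} {k k' : Fin n → ℤ} {x : EuclideanSpace ℝ (Fin n)}
    (h : x ∈ dyadicCube j k) (h' : x ∈ dyadicCube j k') : k = k' := by
  rw [mem_dyadicCube_iff] at h h'
  funext i
  have h1 := (h i).1; have h2 := (h i).2; have h3 := (h' i).1; have h4 := (h' i).2
  have : k i = ⌊(2:ℝ)^j * x i⌋ := by rw [Int.floor_eq_iff.mpr ⟨h1, h2⟩]
  have that : k' i = ⌊(2:ℝ)^j * x i⌋ := by rw [Int.floor_eq_iff.mpr ⟨h3, h4⟩]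
  rw [this, that]

lemma mem_dyadicCube_floor {n : ℕ} (j : ℤ) (x : EuclideanSpace ℝ (Fin n)) :
    x ∈ dyadicCube j (fun i => ⌊(2:ℝ)^j * x i⌋) := by
  rw [mem_dyadicCube_iff]
  intro i
  exact ⟨Int.floor_le _, Int.lt_floor_add_one _⟩

lemma measurableSet_dyadicCube {n : ℕ} (j : ℤ) (k : Fin n → ℤ) :
    MeasurableSet (dyadicCube j k) := by
  have : dyadicCube j k = ⋂ i, {x : EuclideanSpace ℝ (Fin n) |
      (2 : ℝ) ^ (-j) * (k i : ℝ) ≤ x i ∧ x i < (2 : ℝ) ^ (-j) * ((k i : ℝ) + 1)} := by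
    ext x; simp [dyadicCube, Set.mem_iInter]
  rw [this]
  refine MeasurableSet.iInter fun i => ?_
  have hm : Measurable fun x : EuclideanSpace ℝ (Fin n) => x i :=
    (measurable_pi_apply i).comp (WithLp.measurable_ofLp 2 (Fin n → ℝ))
  exact (measurableSet_le measurable_const hm).inter (measurableSet_lt hm measurable_const)

lemma dyadicCube_eq_preimage {n : ℕ} (j : ℤ) (k : Fin n → ℤ) :
    dyadicCube j k = (MeasurableEquiv.toLp 2 (Fin n → ℝ)).symm ⁻¹'
      (Set.univ.pi fun i => Set.Ico ((2:ℝ)^(-j) * (k i : ℝ)) ((2:ℝ)^(-j) * ((k i : ℝ)+1))) := by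
  ext x
  simp [dyadicCube, Set.mem_pi, MeasurableEquiv.coe_toLp_symm]

lemma volume_dyadicCube {n : ℕ} (j : ℤ) (k : Fin n → ℤ) :
    volume (dyadicCube j k) = ENNReal.ofReal (((2:ℝ)^(-j))^n) := by
  rw [dyadicCube_eq_preimage,
    (EuclideanSpace.volume_preserving_symm_measurableEquiv_toLp (Fin n)).measure_preimage
      ((MeasurableSet.univ_pi (fun i => measurableSet_Ico)).nullMeasurableSet)]
  rw [volume_pi_pi]
  have hside : ∀ i : Fin n, volume (Set.Ico ((2:ℝ)^(-j) * (k i : ℝ)) ((2:ℝ)^(-j) * ((k i : ℝ)+1)))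
      = ENNReal.ofReal ((2:ℝ)^(-j)) := by
    intro i; rw [Real.volume_Ico]; ring_nf
  simp only [hside]
  rw [Finset.prod_const, ← ENNReal.ofReal_pow (by positivity)]
  simp

lemma dist_le_of_mem_dyadicCube {n : ℕ} {j : ℤ} {k : Fin n → ℤ}
    {x y : EuclideanSpace ℝ (Fin n)} (hx : x ∈ dyadicCube j k) (hy : y ∈ dyadicCube j k) :
    dist x y ≤ Real.sqrt n * (2:ℝ)^(-j) := by
  rw [EuclideanSpace.dist_eq]
  have hbd : ∀ i : Fin n, dist (x i) (y i) ^ 2 ≤ ((2:ℝ)^(-j))^2 := by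
    intro i
    obtain ⟨hx1, hx2⟩ := hx i
    obtain ⟨hy1, hy2⟩ := hy i
    have h1 : |x i - y i| ≤ (2:ℝ)^(-j) := by
      rw [abs_le]; constructor <;> nlinarith
    rw [Real.dist_eq]
    have h2 : (0:ℝ) ≤ |x i - y i| := abs_nonneg _
    nlinarith
  have hsum : (∑ i : Fin n, dist (x i) (y i) ^ 2) ≤ n * ((2:ℝ)^(-j))^2 := by
    calc (∑ i : Fin n, dist (x i) (y i) ^ 2) ≤ ∑ _i : Fin n, ((2:ℝ)^(-j))^2 :=
          Finset.sum_le_sum fun i _ => hbd i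
      _ = n * ((2:ℝ)^(-j))^2 := by simp [Finset.sum_const, mul_comm]
  calc Real.sqrt (∑ i : Fin n, dist (x i) (y i) ^ 2) ≤ Real.sqrt (n * ((2:ℝ)^(-j))^2) :=
        Real.sqrt_le_sqrt hsum
    _ = Real.sqrt n * (2:ℝ)^(-j) := by
        rw [Real.sqrt_mul (Nat.cast_nonneg n), Real.sqrt_sq (by positivity)]


lemma seqLevelFn_eq {n : ℕ} (s : EuclideanSpace ℝ (Fin n) → ℝ)
    (t : ℕ → (Fin n → ℤ) → ℝ≥0∞) (J : ℤ) (K : Fin n → ℤ) (ℓ : ℕ)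
    {k : Fin n → ℤ} {x : EuclideanSpace ℝ (Fin n)}
    (hx : x ∈ dyadicCube (ℓ : ℤ) k) (hsub : dyadicCube (ℓ : ℤ) k ⊆ dyadicCube J K) :
    seqLevelFn s t J K ℓ x = ENNReal.ofReal ((2 : ℝ) ^ ((ℓ : ℝ) * (s x + n / 2))) * t ℓ k := by
  have hxP : x ∈ dyadicCube J K := hsub hx
  rw [seqLevelFn, Set.indicator_of_mem hxP]
  rw [tsum_eq_single k]
  · rw [if_pos ⟨hx, hsub⟩]
  · intro k' hk'
    rw [if_neg]
    rintro ⟨h1, _⟩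
    exact hk' (dyadicCube_unique h1 hx)

lemma seqLevelFn_eq_zero {n : ℕ} (s : EuclideanSpace ℝ (Fin n) → ℝ)
    (t : ℕ → (Fin n → ℤ) → ℝ≥0∞) (J : ℤ) (K : Fin n → ℤ) (ℓ : ℕ)
    {x : EuclideanSpace ℝ (Fin n)}
    (h : ¬ (x ∈ dyadicCube J K ∧
      dyadicCube (ℓ : ℤ) (fun i => ⌊(2:ℝ)^(ℓ:ℤ) * x i⌋) ⊆ dyadicCube J K)) :
    seqLevelFn s t J K ℓ x = 0 := by
  by_cases hxP : x ∈ dyadicCube J K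
  · rw [seqLevelFn, Set.indicator_of_mem hxP]
    have : ∀ k' : Fin n → ℤ,
        (if x ∈ dyadicCube (ℓ : ℤ) k' ∧ dyadicCube (ℓ : ℤ) k' ⊆ dyadicCube J K then
          ENNReal.ofReal ((2 : ℝ) ^ ((ℓ : ℝ) * (s x + n / 2))) * t ℓ k' else 0) = 0 := by
      intro k'
      rw [if_neg]
      rintro ⟨h1, h2⟩
      have hk : k' = fun i => ⌊(2:ℝ)^(ℓ:ℤ) * x i⌋ :=
        dyadicCube_unique h1 (mem_dyadicCube_floor (ℓ:ℤ) x)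
      rw [hk] at h2
      exact h ⟨hxP, h2⟩
    simp only [this, tsum_zero]
  · rw [seqLevelFn, Set.indicator_of_notMem hxP]


lemma thetaLemma {c w q0 q1 u : ℝ} (hc : 1 ≤ c) (hw0 : 0 < w)
    (hq0 : 0 < q0) (hq : q0 ≤ q1) (hu0 : 0 < u) (hu : u ≤ c * w ^ (-(1/q0))) :
    (u / c * w ^ (1/q0 - 1/q1)) ^ q1 ≤ u ^ q0 := by
  have hc0 : (0:ℝ) < c := lt_of_lt_of_le one_pos hc
  have hq1 : 0 < q1 := lt_of_lt_of_le hq0 hq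
  set W : ℝ := w ^ (-(1/q0)) with hW
  have hW0 : 0 < W := rpow_pos_of_pos hw0 _
  set θ : ℝ := u / (c * W) with hθ
  have hθ0 : 0 < θ := div_pos hu0 (mul_pos hc0 hW0)
  have hθ1 : θ ≤ 1 := by
    rw [hθ, div_le_one (mul_pos hc0 hW0)]; simpa [one_mul] using hu
  have hu_eq : u = c * W * θ := by
    rw [hθ, mul_div_assoc', mul_div_cancel_left₀ u (mul_pos hc0 hW0).ne']
  have hWq : W ^ q0 = w ^ (-(1:ℝ)) := by
    rw [hW, ← Real.rpow_mul hw0.le]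
    congr 1
    field_simp
  have hkey : W * w ^ (1/q0 - 1/q1) = w ^ (-(1/q1)) := by
    rw [hW, ← Real.rpow_add hw0]
    ring_nf
  have hdivc : (c * W * θ) / c = W * θ := by field_simp
  have hL : u / c * w ^ (1/q0 - 1/q1) = θ * w ^ (-(1/q1)) := by
    calc u / c * w ^ (1/q0 - 1/q1) = (W * θ) * w ^ (1/q0 - 1/q1) := by
          rw [hu_eq, hdivc]
      _ = θ * (W * w ^ (1/q0 - 1/q1)) := by ring
      _ = θ * w ^ (-(1/q1)) := by rw [hkey]
  rw [hL]
  conv_rhs => rw [hu_eq]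
  have h1 : (θ * w ^ (-(1/q1))) ^ q1 = θ ^ q1 * w ^ (-(1:ℝ)) := by
    rw [Real.mul_rpow hθ0.le (rpow_pos_of_pos hw0 _).le, ← Real.rpow_mul hw0.le]
    congr 2
    field_simp
  have h2 : (c * W * θ) ^ q0 = c ^ q0 * (w ^ (-(1:ℝ)) * θ ^ q0) := by
    rw [Real.mul_rpow (mul_pos hc0 hW0).le hθ0.le, Real.mul_rpow hc0.le hW0.le, hWq]
    ring
  rw [h1, h2]
  have h3 : θ ^ q1 ≤ θ ^ q0 := Real.rpow_le_rpow_of_exponent_ge hθ0 hθ1 hq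
  have hcq : 1 ≤ c ^ q0 := Real.one_le_rpow hc hq0.le
  have hwpos : (0:ℝ) < w ^ (-(1:ℝ)) := rpow_pos_of_pos hw0 _
  have hθq0 : (0:ℝ) < θ ^ q0 := rpow_pos_of_pos hθ0 _
  nlinarith [mul_le_mul_of_nonneg_right h3 hwpos.le,
    mul_le_mul_of_nonneg_right hcq (mul_pos hwpos hθq0).le]

lemma logBound {D : ℝ} (hD : 1 ≤ D) :
    ∃ B : ℝ, 0 < B ∧ ∀ (ℓ : ℕ) (d : ℝ), 0 < d → d ≤ D * (2:ℝ) ^ (-(ℓ:ℝ)) →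
      (ℓ : ℝ) ≤ B * Real.log (Real.exp 1 + 1 / d) := by
  have hlog2 : (0:ℝ) < Real.log 2 := Real.log_pos (by norm_num)
  have hlogD : 0 ≤ Real.log D := Real.log_nonneg hD
  refine ⟨2 / Real.log 2 + (2 * Real.log D + 2) / Real.log 2, by positivity, ?_⟩
  intro ℓ d hd hdle
  set L : ℝ := Real.log (Real.exp 1 + 1 / d) with hL
  have hD0 : (0:ℝ) < D := lt_of_lt_of_le one_pos hD
  have hL1 : 1 ≤ L := by
    rw [hL]
    calc (1:ℝ) = Real.log (Real.exp 1) := by rw [Real.log_exp]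
      _ ≤ Real.log (Real.exp 1 + 1/d) := by
          apply Real.log_le_log (Real.exp_pos 1)
          have : 0 < 1/d := by positivity
          linarith
  have hL2 : (ℓ:ℝ) * Real.log 2 - Real.log D ≤ L := by
    have h1d : (2:ℝ)^((ℓ:ℝ)) / D ≤ 1 / d := by
      rw [div_le_div_iff₀ hD0 hd]
      have h2 : (2:ℝ)^((ℓ:ℝ)) * d ≤ (2:ℝ)^((ℓ:ℝ)) * (D * (2:ℝ)^(-(ℓ:ℝ))) := by
        apply mul_le_mul_of_nonneg_left hdle (by positivity)
      calc (2:ℝ)^((ℓ:ℝ)) * d ≤ (2:ℝ)^((ℓ:ℝ)) * (D * (2:ℝ)^(-(ℓ:ℝ))) := h2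
        _ = 1 * D := by rw [mul_comm D _, ← mul_assoc, ← Real.rpow_add (by norm_num)]; simp
        _ = 1 * D := rfl
    have hpos : (0:ℝ) < (2:ℝ)^((ℓ:ℝ)) / D := by positivity
    calc (ℓ:ℝ) * Real.log 2 - Real.log D = Real.log ((2:ℝ)^((ℓ:ℝ)) / D) := by
          rw [Real.log_div (by positivity) hD0.ne', Real.log_rpow (by norm_num)]
      _ ≤ Real.log (1/d) := Real.log_le_log hpos h1d
      _ ≤ L := by
          rw [hL]
          apply Real.log_le_log (by positivity)
          have := (Real.exp_pos 1).le
          linarith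
  have hLpos : (0:ℝ) < L := lt_of_lt_of_le one_pos hL1
  by_cases hcase : (ℓ:ℝ) * Real.log 2 ≤ 2 * Real.log D + 2
  · calc (ℓ:ℝ) ≤ (2 * Real.log D + 2) / Real.log 2 := by
          rw [le_div_iff₀ hlog2]; linarith
      _ = (2 * Real.log D + 2) / Real.log 2 * 1 := by ring
      _ ≤ (2 * Real.log D + 2) / Real.log 2 * L := by
          apply mul_le_mul_of_nonneg_left hL1 (by positivity)
      _ ≤ (2 / Real.log 2 + (2 * Real.log D + 2) / Real.log 2) * L := by
          have : (0:ℝ) ≤ 2 / Real.log 2 * L := by positivity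
          nlinarith
  · push_neg at hcase
    have h4 : (ℓ:ℝ) * Real.log 2 / 2 ≤ L := by nlinarith
    calc (ℓ:ℝ) = 2 / Real.log 2 * ((ℓ:ℝ) * Real.log 2 / 2) := by field_simp
      _ ≤ 2 / Real.log 2 * L := by
          apply mul_le_mul_of_nonneg_left h4 (by positivity)
      _ ≤ (2 / Real.log 2 + (2 * Real.log D + 2) / Real.log 2) * L := by
          have : (0:ℝ) ≤ (2 * Real.log D + 2) / Real.log 2 * L := by positivity
          nlinarith


lemma essInf_pos_ae {α : Type*} [MeasurableSpace α] {μ : Measure α} {p : α → ℝ}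
    (h : 0 < essInf p μ) : ∃ ε : ℝ, 0 < ε ∧ ∀ᵐ x ∂μ, ε ≤ p x := by
  have hdef : essInf p μ = sSup {a : ℝ | ∀ᶠ x in ae μ, a ≤ p x} := by
    rw [essInf, Filter.liminf_eq]
  set S := {a : ℝ | ∀ᶠ x in ae μ, a ≤ p x} with hS
  rw [hdef] at h
  have hne : S.Nonempty := by
    by_contra hc
    rw [Set.not_nonempty_iff_eq_empty] at hc
    rw [hc, Real.sSup_empty] at h
    exact lt_irrefl 0 h
  have hlt : sSup S / 2 < sSup S := by linarith [half_lt_self h]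
  obtain ⟨a, haS, ha⟩ := exists_lt_of_lt_csSup hne hlt
  exact ⟨a, lt_trans (by linarith) ha, haS⟩

lemma continuous_of_locLogHolder {n : ℕ} {C : ℝ} {g : EuclideanSpace ℝ (Fin n) → ℝ}
    (hC : 0 < C) (h : LocLogHolderWith C g) : Continuous g := by
  rw [Metric.continuous_iff]
  intro x ε hε
  refine ⟨(Real.exp (C / ε))⁻¹, by positivity, fun y hy => ?_⟩
  rcases eq_or_ne y x with rfl | hne
  · simpa using hε
  have hd : 0 < dist y x := dist_pos.mpr hne
  have h1 : Real.exp (C / ε) < 1 / dist y x := by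
    rw [lt_div_iff₀ hd]
    calc Real.exp (C / ε) * dist y x < Real.exp (C / ε) * (Real.exp (C / ε))⁻¹ := by
          apply mul_lt_mul_of_pos_left hy (Real.exp_pos _)
      _ = 1 := mul_inv_cancel₀ (Real.exp_pos _).ne'
  have h2 : C / ε < Real.log (Real.exp 1 + 1 / dist y x) := by
    calc C / ε = Real.log (Real.exp (C / ε)) := (Real.log_exp _).symm
      _ < Real.log (Real.exp 1 + 1 / dist y x) := by
          apply Real.log_lt_log (Real.exp_pos _)
          have := (Real.exp_pos 1).le
          linarith
  have hlogpos : 0 < Real.log (Real.exp 1 + 1 / dist y x) :=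
    lt_trans (by positivity) h2
  have h3 := h y x hne
  rw [Real.dist_eq]
  calc |g y - g x| ≤ C / Real.log (Real.exp 1 + 1 / dist y x) := h3
    _ < ε := by
        rw [div_lt_iff₀ hlogpos]
        rw [div_lt_iff₀ hε] at h2
        linarith

lemma pointwise_lb_of_ae {n : ℕ} {p : EuclideanSpace ℝ (Fin n) → ℝ} {ε : ℝ}
    (hcont : Continuous p) (hae : ∀ᵐ x, ε ≤ p x) : ∀ x, ε ≤ p x := by
  intro x
  by_contra hx
  push_neg at hx
  have hopen : IsOpen {y : EuclideanSpace ℝ (Fin n) | p y < ε} :=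
    isOpen_lt hcont continuous_const
  have hpos : 0 < volume {y : EuclideanSpace ℝ (Fin n) | p y < ε} :=
    hopen.measure_pos volume ⟨x, hx⟩
  have : volume {y : EuclideanSpace ℝ (Fin n) | p y < ε} = 0 := by
    have := hae
    rw [ae_iff] at this
    convert this using 2
    ext y
    simp [not_le]
  rw [this] at hpos
  exact lt_irrefl 0 hpos


lemma varModular_top {n : ℕ} (p : EuclideanSpace ℝ (Fin n) → ℝ) (hp : ∀ x, 0 < p x)
    (f : EuclideanSpace ℝ (Fin n) → ℝ≥0∞) :
    varModularR p (fun x => f x / (⊤ : ℝ≥0∞)) = 0 := by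
  rw [varModularR]
  have : ∀ x : EuclideanSpace ℝ (Fin n), (f x / (⊤:ℝ≥0∞)) ^ p x = 0 := by
    intro x
    rw [ENNReal.div_top, ENNReal.zero_rpow_of_pos (hp x)]
  simp only [this, lintegral_zero]

lemma varNorm_transfer {n : ℕ} (p₀ p₁ : EuclideanSpace ℝ (Fin n) → ℝ)
    (f₀ f₁ : EuclideanSpace ℝ (Fin n) → ℝ≥0∞) (c : ℝ≥0∞) (hc1 : 1 ≤ c) (hctop : c ≠ ⊤)
    (hp₁ : ∀ x, 0 < p₁ x)
    (h : ∀ lam : ℝ≥0∞, 0 < lam → lam ≠ ⊤ →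
      varModularR p₀ (fun x => f₀ x / lam) ≤ 1 →
      varModularR p₁ (fun x => f₁ x / (c * lam)) ≤ 1) :
    varNormR p₁ f₁ ≤ c * varNormR p₀ f₀ := by
  have hc0 : c ≠ 0 := by intro hc; rw [hc] at hc1; simp at hc1
  set S₁ := {lam : ℝ≥0∞ | 0 < lam ∧ varModularR p₁ (fun x => f₁ x / lam) ≤ 1} with hS₁
  have hmem : ∀ lam : ℝ≥0∞, 0 < lam → lam ≠ ⊤ →
      varModularR p₀ (fun x => f₀ x / lam) ≤ 1 → c * lam ∈ S₁ := by
    intro lam h1 h2 h3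
    exact ⟨ENNReal.mul_pos hc0 h1.ne', h lam h1 h2 h3⟩
  -- main: sInf S₁ ≤ c * sInf S₀
  by_cases htop : varNormR p₀ f₀ = ⊤
  · rw [htop, ENNReal.mul_top hc0]
    exact le_top
  · apply ENNReal.le_of_forall_pos_le_add
    intro ε hε hlt
    set I := varNormR p₀ f₀ with hI
    have hItop : I ≠ ⊤ := htop
    have hδ : (0:ℝ≥0∞) < (ε : ℝ≥0∞) / c := by
      apply ENNReal.div_pos (by exact_mod_cast hε.ne') hctop
    have hlt2 : I < I + (ε : ℝ≥0∞) / c := by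
      apply ENNReal.lt_add_right hItop hδ.ne'
    have : sInf {lam : ℝ≥0∞ | 0 < lam ∧ varModularR p₀ (fun x => f₀ x / lam) ≤ 1}
        < I + (ε : ℝ≥0∞) / c := hlt2
    obtain ⟨lam, hlamS, hlamlt⟩ := sInf_lt_iff.mp this
    have hlamtop : lam ≠ ⊤ := by
      intro hh
      rw [hh] at hlamlt
      exact (lt_irrefl _ (lt_of_le_of_lt le_top hlamlt)).elim
    have hmem2 := hmem lam hlamS.1 hlamtop hlamS.2
    calc varNormR p₁ f₁ ≤ c * lam := sInf_le hmem2
      _ ≤ c * (I + (ε : ℝ≥0∞) / c) := mul_le_mul_right hlamlt.le c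
      _ = c * I + c * ((ε : ℝ≥0∞) / c) := by rw [mul_add]
      _ = c * I + ε := by rw [ENNReal.mul_div_cancel hc0 hctop]


lemma volume_univ_zero_dim : volume (Set.univ : Set (EuclideanSpace ℝ (Fin 0))) = 1 := by
  have h := (EuclideanSpace.volume_preserving_symm_measurableEquiv_toLp (Fin 0)).measure_preimage
    (s := (Set.univ : Set (Fin 0 → ℝ))) MeasurableSet.univ.nullMeasurableSet
  rw [Set.preimage_univ] at h
  rw [h, ← Set.pi_univ Set.univ, volume_pi_pi]
  simp

lemma varModularR_zero_dim (p : EuclideanSpace ℝ (Fin 0) → ℝ)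
    (g : EuclideanSpace ℝ (Fin 0) → ℝ≥0∞) :
    varModularR p g = g 0 ^ p 0 := by
  have hconst : (fun x : EuclideanSpace ℝ (Fin 0) => g x ^ p x)
      = fun _ => g 0 ^ p 0 := by
    funext x
    rw [Subsingleton.elim x 0]
  rw [varModularR, hconst, lintegral_const, volume_univ_zero_dim, mul_one]

lemma varNormR_zero_dim_eq (p p' : EuclideanSpace ℝ (Fin 0) → ℝ)
    (hp : 0 < p 0) (hp' : 0 < p' 0) (f : EuclideanSpace ℝ (Fin 0) → ℝ≥0∞) :
    varNormR p f = varNormR p' f := by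
  have hiff : ∀ (q : EuclideanSpace ℝ (Fin 0) → ℝ), 0 < q 0 → ∀ lam : ℝ≥0∞,
      (varModularR q (fun x => f x / lam) ≤ 1 ↔ f 0 / lam ≤ 1) := by
    intro q hq lam
    rw [varModularR_zero_dim]
    constructor
    · intro h
      by_contra hc
      push_neg at hc
      exact absurd h (not_le.mpr (ENNReal.one_lt_rpow hc hq))
    · intro h
      exact ENNReal.rpow_le_one h hq.le
  rw [varNormR, varNormR]
  congr 1
  ext lam
  simp only [Set.mem_setOf_eq]
  rw [and_congr_right_iff]
  intro _
  rw [hiff p hp lam, hiff p' hp' lam]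


lemma zpow_eq_rpow_neg (ℓ : ℕ) : (2:ℝ)^(-(ℓ:ℤ)) = (2:ℝ)^(-(ℓ:ℝ)) := by
  rw [← Real.rpow_intCast 2 (-(ℓ:ℤ))]
  norm_num

set_option maxHeartbeats 1000000 in
lemma core_modular {n : ℕ} (hn : 0 < n)
    (p₀ p₁ s₀ s₁ : EuclideanSpace ℝ (Fin n) → ℝ)
    (pm Cs Cp B : ℝ)
    (hpm : 0 < pm) (hp₀lb : ∀ x, pm ≤ p₀ x) (hp₁pos : ∀ x, 0 < p₁ x)
    (hCs : 0 ≤ Cs) (hCp : 0 ≤ Cp) (hB : 0 < B)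
    (hs₀h : LocLogHolderWith Cs s₀) (hp₀h : LocLogHolderWith Cp p₀)
    (hBlog : ∀ (ℓ : ℕ) (d : ℝ), 0 < d → d ≤ Real.sqrt n * (2:ℝ)^(-(ℓ:ℝ)) →
      (ℓ:ℝ) ≤ B * Real.log (Real.exp 1 + 1/d))
    (hle : ∀ x, s₁ x ≤ s₀ x) (htrace : ∀ x, s₀ x - n / p₀ x = s₁ x - n / p₁ x)
    (T : ℕ → (Fin n → ℤ) → ℝ≥0∞) (hT : ∀ ℓ k, T ℓ k ≠ ⊤)
    (J : ℤ) (K : Fin n → ℤ) (ℓ : ℕ)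
    (lam : ℝ≥0∞) (hlam : 0 < lam) (hlamtop : lam ≠ ⊤)
    (hmod : varModularR p₀ (fun x => seqLevelFn s₀ T J K ℓ x / lam) ≤ 1) :
    varModularR p₁ (fun x => seqLevelFn s₁ T J K ℓ x /
      (ENNReal.ofReal ((2:ℝ)^(Cs*B) * ((2:ℝ)^(Cp*B*((n:ℝ)/pm)))^(1/pm)) * lam)) ≤ 1 := by
  set κ : ℝ := (2:ℝ)^(Cs*B) with hκdef
  set κ₂ : ℝ := (2:ℝ)^(Cp*B*((n:ℝ)/pm)) with hκ₂def
  set c : ℝ := κ * κ₂^(1/pm) with hcdef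
  have hκ1 : 1 ≤ κ := Real.one_le_rpow one_le_two (by positivity)
  have hκ₂1 : 1 ≤ κ₂ := Real.one_le_rpow one_le_two (by positivity)
  have hκ₂pow1 : 1 ≤ κ₂^(1/pm) := Real.one_le_rpow hκ₂1 (by positivity)
  have hc1 : (1:ℝ) ≤ c := by nlinarith
  have hc0 : (0:ℝ) < c := lt_of_lt_of_le one_pos hc1
  have hlr : 0 < lam.toReal := ENNReal.toReal_pos hlam.ne' hlamtop
  set lr := lam.toReal with hlrdef
  have hlam_eq : lam = ENNReal.ofReal lr := (ENNReal.ofReal_toReal hlamtop).symm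
  have hclam_eq : ENNReal.ofReal c * lam = ENNReal.ofReal (c * lr) := by
    rw [hlam_eq, ← ENNReal.ofReal_mul hc0.le]
  -- reduce to a pointwise estimate
  rw [varModularR]
  rw [varModularR] at hmod
  refine le_trans (lintegral_mono fun x => ?_) hmod
  by_cases hx : x ∈ dyadicCube J K ∧
      dyadicCube (ℓ:ℤ) (fun i => ⌊(2:ℝ)^(ℓ:ℤ) * x i⌋) ⊆ dyadicCube J K
  case neg =>
    rw [seqLevelFn_eq_zero s₁ T J K ℓ hx]
    rw [ENNReal.zero_div, ENNReal.zero_rpow_of_pos (hp₁pos x)]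
    exact zero_le
  case pos =>
  obtain ⟨hxP, hsub⟩ := hx
  set kx : Fin n → ℤ := fun i => ⌊(2:ℝ)^(ℓ:ℤ) * x i⌋ with hkxdef
  have hxQ : x ∈ dyadicCube (ℓ:ℤ) kx := mem_dyadicCube_floor _ x
  by_cases hT0 : T ℓ kx = 0
  · rw [seqLevelFn_eq s₁ T J K ℓ hxQ hsub, hT0, mul_zero, ENNReal.zero_div,
      ENNReal.zero_rpow_of_pos (hp₁pos x)]
    exact zero_le
  -- main case
  have har : 0 < (T ℓ kx).toReal := ENNReal.toReal_pos hT0 (hT ℓ kx)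
  set ar := (T ℓ kx).toReal with hardef
  have hT_eq : T ℓ kx = ENNReal.ofReal ar := (ENNReal.ofReal_toReal (hT ℓ kx)).symm
  set Q : Set (EuclideanSpace ℝ (Fin n)) := dyadicCube (ℓ:ℤ) kx with hQdef
  set u : EuclideanSpace ℝ (Fin n) → ℝ :=
    fun y => (2:ℝ)^((ℓ:ℝ)*(s₀ y + n/2)) * ar / lr with hudef
  have hu0 : ∀ y, 0 < u y := fun y => by
    rw [hudef]; positivity
  have hF₀ : ∀ y ∈ Q, seqLevelFn s₀ T J K ℓ y / lam = ENNReal.ofReal (u y) := by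
    intro y hy
    rw [seqLevelFn_eq s₀ T J K ℓ hy hsub, hT_eq, hlam_eq,
      ← ENNReal.ofReal_mul (by positivity), ← ENNReal.ofReal_div_of_pos hlr]
  -- the volume of Q
  set w : ℝ := (2:ℝ)^(-(ℓ:ℝ)*(n:ℝ)) with hwdef
  have hw0 : 0 < w := Real.rpow_pos_of_pos (by norm_num) _
  have hw1 : w ≤ 1 := by
    rw [hwdef]
    apply Real.rpow_le_one_of_one_le_of_nonpos one_le_two
    have : (0:ℝ) ≤ (ℓ:ℝ)*(n:ℝ) := by positivity
    linarith
  have hvolQ : volume Q = ENNReal.ofReal w := by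
    rw [hQdef, volume_dyadicCube, hwdef]
    congr 1
    rw [zpow_eq_rpow_neg ℓ, ← Real.rpow_natCast ((2:ℝ)^(-(ℓ:ℝ))) n,
      ← Real.rpow_mul (by norm_num)]
  -- oscillation bounds
  have hosc : ∀ (g : EuclideanSpace ℝ (Fin n) → ℝ) (Cg : ℝ), 0 ≤ Cg → LocLogHolderWith Cg g →
      ∀ y ∈ Q, ∀ z ∈ Q, (ℓ:ℝ) * |g y - g z| ≤ Cg * B := by
    intro g Cg hCg hg y hy z hz
    rcases eq_or_ne y z with rfl | hne
    · simp only [sub_self, abs_zero, mul_zero]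
      positivity
    · have hd : 0 < dist y z := dist_pos.mpr hne
      have hdle : dist y z ≤ Real.sqrt n * (2:ℝ)^(-(ℓ:ℝ)) := by
        rw [← zpow_eq_rpow_neg ℓ]
        exact dist_le_of_mem_dyadicCube hy hz
      have hℓle := hBlog ℓ (dist y z) hd hdle
      have hgle := hg y z hne
      set L := Real.log (Real.exp 1 + 1/dist y z) with hLdef
      have h1d : 0 < 1/dist y z := by positivity
      have hL1 : (1:ℝ) ≤ L := by
        rw [hLdef]
        calc (1:ℝ) = Real.log (Real.exp 1) := (Real.log_exp 1).symm
          _ ≤ _ := Real.log_le_log (Real.exp_pos 1) (by linarith)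
      have hL0 : 0 < L := lt_of_lt_of_le one_pos hL1
      calc (ℓ:ℝ) * |g y - g z| ≤ (B * L) * (Cg / L) := by
            apply mul_le_mul hℓle hgle (abs_nonneg _) (by positivity)
        _ = Cg * B := by field_simp
  have hosc_s := hosc s₀ Cs hCs hs₀h
  have hosc_p := hosc p₀ Cp hCp hp₀h
  -- κ-lower bound for u on Q
  have hℓ0 : (0:ℝ) ≤ (ℓ:ℝ) := Nat.cast_nonneg ℓ
  have hκ0 : (0:ℝ) < κ := lt_of_lt_of_le one_pos hκ1
  have hulb : ∀ y ∈ Q, u x / κ ≤ u y := by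
    intro y hy
    have hsplit : (2:ℝ)^((ℓ:ℝ)*(s₀ x + n/2))
        = (2:ℝ)^((ℓ:ℝ)*(s₀ y + n/2)) * (2:ℝ)^((ℓ:ℝ)*(s₀ x - s₀ y)) := by
      rw [← Real.rpow_add two_pos]
      ring_nf
    have hratio : u x = u y * (2:ℝ)^((ℓ:ℝ)*(s₀ x - s₀ y)) := by
      simp only [hudef]
      rw [hsplit]
      ring
    have hexp : (2:ℝ)^((ℓ:ℝ)*(s₀ x - s₀ y)) ≤ κ := by
      rw [hκdef]
      apply Real.rpow_le_rpow_of_exponent_le one_le_two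
      have h1 : (ℓ:ℝ)*(s₀ x - s₀ y) ≤ (ℓ:ℝ)*|s₀ x - s₀ y| :=
        mul_le_mul_of_nonneg_left (le_abs_self _) hℓ0
      exact le_trans h1 (hosc_s x hxQ y hy)
    rw [div_le_iff₀ hκ0]
    calc u x = u y * (2:ℝ)^((ℓ:ℝ)*(s₀ x - s₀ y)) := hratio
      _ ≤ u y * κ := mul_le_mul_of_nonneg_left hexp (hu0 y).le
  set v : ℝ := u x / κ with hvdef
  have hv0 : 0 < v := div_pos (hu0 x) hκ0
  -- restricted modular bound with the real integrand
  have hint : ∫⁻ y in Q, ENNReal.ofReal (u y) ^ (p₀ y) ∂volume ≤ 1 := by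
    have h1 : ∫⁻ y in Q, (seqLevelFn s₀ T J K ℓ y / lam) ^ (p₀ y) ∂volume ≤ 1 :=
      le_trans (setLIntegral_le_lintegral _ _) hmod
    have h2 : ∫⁻ y in Q, ENNReal.ofReal (u y) ^ (p₀ y) ∂volume
        = ∫⁻ y in Q, (seqLevelFn s₀ T J K ℓ y / lam) ^ (p₀ y) ∂volume := by
      apply setLIntegral_congr_fun (measurableSet_dyadicCube _ _)
      intro y hy; simp only [hF₀ y hy]
    rw [h2]
    exact h1
  -- generic lower-bound extraction
  have hextract : ∀ m : ℝ, 0 ≤ m →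
      (∀ y ∈ Q, ENNReal.ofReal m ≤ ENNReal.ofReal (u y) ^ (p₀ y)) → m * w ≤ 1 := by
    intro m hm hmle
    have h1 : ENNReal.ofReal m * volume Q
        ≤ ∫⁻ y in Q, ENNReal.ofReal (u y) ^ (p₀ y) ∂volume := by
      rw [← setLIntegral_const Q (ENNReal.ofReal m)]
      apply lintegral_mono_ae
      rw [ae_restrict_iff' (measurableSet_dyadicCube _ _)]
      exact ae_of_all _ hmle
    have h2 : ENNReal.ofReal (m * w) ≤ 1 := by
      rw [ENNReal.ofReal_mul hm, ← hvolQ]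
      exact le_trans h1 hint
    exact ENNReal.ofReal_le_one.mp h2
  -- pointwise comparison inside Q for powers of u
  have hupow : ∀ y ∈ Q, ∀ m : ℝ, m ≤ v ^ (p₀ y) →
      ENNReal.ofReal m ≤ ENNReal.ofReal (u y) ^ (p₀ y) := by
    intro y hy m hmle
    rw [ENNReal.ofReal_rpow_of_pos (hu0 y)]
    apply ENNReal.ofReal_le_ofReal
    refine le_trans hmle ?_
    exact Real.rpow_le_rpow hv0.le (hulb y hy) (le_trans hpm.le (hp₀lb y))
  have hp₀pos : ∀ y, (0:ℝ) < p₀ y := fun y => lt_of_lt_of_le hpm (hp₀lb y)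
  -- the key bound u x ≤ c * w ^ (-(1/p₀ x))
  have hwinv1 : (1:ℝ) ≤ w ^ (-(1/p₀ x)) := by
    calc (1:ℝ) = w ^ (0:ℝ) := (Real.rpow_zero w).symm
      _ ≤ w ^ (-(1/p₀ x)) := Real.rpow_le_rpow_of_exponent_ge hw0 hw1 (by
          have : 0 < 1/p₀ x := one_div_pos.mpr (hp₀pos x)
          linarith)
  have hkey : u x ≤ c * w ^ (-(1/p₀ x)) := by
    by_cases hv1 : v ≤ 1
    · have hux : u x ≤ κ := by
        rw [hvdef, div_le_one hκ0] at hv1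
        simpa using hv1
      calc u x ≤ κ := hux
        _ = κ * 1 * 1 := by ring
        _ ≤ c * w ^ (-(1/p₀ x)) := by
            rw [hcdef]
            have h1 : κ * 1 ≤ κ * κ₂^(1/pm) := by nlinarith
            have h2 : (0:ℝ) ≤ κ * κ₂^(1/pm) := by positivity
            calc κ * 1 * 1 ≤ (κ * κ₂^(1/pm)) * 1 := by nlinarith
              _ ≤ (κ * κ₂^(1/pm)) * (w ^ (-(1/p₀ x))) := by nlinarith
    · push_neg at hv1
      -- step (i): crude bound v ≤ (1/w) ^ (1/pm)
      have hstep1 : v ^ pm * w ≤ 1 := by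
        apply hextract _ (by positivity)
        intro y hy
        apply hupow y hy _
        exact Real.rpow_le_rpow_of_exponent_le hv1.le (hp₀lb y)
      have hvpm : v ^ pm ≤ 1 / w := by
        rw [le_div_iff₀ hw0]
        exact hstep1
      have hvle : v ≤ (1/w) ^ (1/pm) := by
        calc v = (v ^ pm) ^ (1/pm) := by
              rw [← Real.rpow_mul hv0.le, mul_one_div, div_self hpm.ne', Real.rpow_one]
          _ ≤ (1/w) ^ (1/pm) := Real.rpow_le_rpow (by positivity) hvpm (by positivity)
      have h1w : 1/w = (2:ℝ)^((ℓ:ℝ)*(n:ℝ)) := by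
        rw [hwdef, neg_mul, Real.rpow_neg (by norm_num : (0:ℝ) ≤ 2), one_div, inv_inv]
      have hWv_eq : ((1/w) ^ (1/pm)) = (2:ℝ) ^ ((ℓ:ℝ)*(n:ℝ)*(1/pm)) := by
        rw [h1w, ← Real.rpow_mul (by norm_num : (0:ℝ) ≤ 2)]
      -- step (ii): refined bound
      have hstep2 : v ^ (p₀ x) / κ₂ * w ≤ 1 := by
        apply hextract _ (by positivity)
        intro y hy
        apply hupow y hy _
        have hsplit2 : v ^ (p₀ y) = v ^ (p₀ x) * v ^ (p₀ y - p₀ x) := by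
          rw [← Real.rpow_add hv0]
          ring_nf
        have habs : v ^ (p₀ x - p₀ y) ≤ κ₂ := by
          calc v ^ (p₀ x - p₀ y) ≤ v ^ |p₀ x - p₀ y| :=
                Real.rpow_le_rpow_of_exponent_le hv1.le (le_abs_self _)
            _ ≤ ((1/w) ^ (1/pm)) ^ |p₀ x - p₀ y| :=
                Real.rpow_le_rpow hv0.le hvle (abs_nonneg _)
            _ = (2:ℝ) ^ ((ℓ:ℝ)*(n:ℝ)*(1/pm) * |p₀ x - p₀ y|) := by
                rw [hWv_eq, ← Real.rpow_mul (by norm_num)]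
            _ ≤ κ₂ := by
                rw [hκ₂def]
                apply Real.rpow_le_rpow_of_exponent_le one_le_two
                have h1 : (ℓ:ℝ) * |p₀ x - p₀ y| ≤ Cp * B := hosc_p x hxQ y hy
                have h2 : (0:ℝ) ≤ (n:ℝ)/pm := by positivity
                calc (ℓ:ℝ)*(n:ℝ)*(1/pm) * |p₀ x - p₀ y|
                    = ((ℓ:ℝ) * |p₀ x - p₀ y|) * ((n:ℝ)/pm) := by ring
                  _ ≤ (Cp * B) * ((n:ℝ)/pm) := mul_le_mul_of_nonneg_right h1 h2
                  _ = Cp * B * ((n:ℝ)/pm) := by ring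
        have hinv : κ₂⁻¹ ≤ v ^ (p₀ y - p₀ x) := by
          have h1 : v ^ (p₀ y - p₀ x) = (v ^ (p₀ x - p₀ y))⁻¹ := by
            rw [show p₀ y - p₀ x = -(p₀ x - p₀ y) by ring, Real.rpow_neg hv0.le]
          rw [h1]
          exact inv_anti₀ (Real.rpow_pos_of_pos hv0 _) habs
        calc v ^ (p₀ x) / κ₂ = v ^ (p₀ x) * κ₂⁻¹ := by ring
          _ ≤ v ^ (p₀ x) * v ^ (p₀ y - p₀ x) :=
              mul_le_mul_of_nonneg_left hinv (Real.rpow_pos_of_pos hv0 _).le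
          _ = v ^ (p₀ y) := hsplit2.symm
      have hκ₂0 : (0:ℝ) < κ₂ := lt_of_lt_of_le one_pos hκ₂1
      have hvpx : v ^ (p₀ x) ≤ κ₂ * w ^ (-(1:ℝ)) := by
        have h1 : v ^ (p₀ x) * w ≤ κ₂ := by
          have h2 := hstep2
          rw [div_mul_eq_mul_div, div_le_one hκ₂0] at h2
          exact h2
        rw [Real.rpow_neg_one, ← div_eq_mul_inv, le_div_iff₀ hw0]
        exact h1
      have hvfin : v ≤ κ₂^(1/pm) * w ^ (-(1/p₀ x)) := by
        have h1 : v ≤ (κ₂ * w ^ (-(1:ℝ))) ^ (1/(p₀ x)) := by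
          calc v = (v ^ (p₀ x)) ^ (1/(p₀ x)) := by
                rw [← Real.rpow_mul hv0.le, mul_one_div, div_self (hp₀pos x).ne',
                  Real.rpow_one]
            _ ≤ (κ₂ * w ^ (-(1:ℝ))) ^ (1/(p₀ x)) :=
                Real.rpow_le_rpow (by positivity) hvpx (one_div_pos.mpr (hp₀pos x)).le
        have h2 : (κ₂ * w ^ (-(1:ℝ))) ^ (1/(p₀ x))
            = κ₂ ^ (1/(p₀ x)) * w ^ (-(1/p₀ x)) := by
          rw [Real.mul_rpow hκ₂0.le (by positivity), ← Real.rpow_mul hw0.le]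
          ring_nf
        have h3 : κ₂ ^ (1/(p₀ x)) ≤ κ₂ ^ (1/pm) := by
          apply Real.rpow_le_rpow_of_exponent_le hκ₂1
          apply one_div_le_one_div_of_le hpm (hp₀lb x)
        calc v ≤ κ₂ ^ (1/(p₀ x)) * w ^ (-(1/p₀ x)) := by rw [← h2]; exact h1
          _ ≤ κ₂ ^ (1/pm) * w ^ (-(1/p₀ x)) := by
              apply mul_le_mul_of_nonneg_right h3 (by positivity)
      calc u x = κ * v := by rw [hvdef]; field_simp
        _ ≤ κ * (κ₂^(1/pm) * w ^ (-(1/p₀ x))) :=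
            mul_le_mul_of_nonneg_left hvfin hκ0.le
        _ = c * w ^ (-(1/p₀ x)) := by rw [hcdef]; ring
  -- exponent comparison p₀ x ≤ p₁ x
  have hp₁x : 0 < p₁ x := hp₁pos x
  have hp₀x : 0 < p₀ x := hp₀pos x
  have hn0 : (0:ℝ) < (n:ℝ) := by exact_mod_cast hn
  have hq : p₀ x ≤ p₁ x := by
    have h1 : (n:ℝ)/p₁ x ≤ (n:ℝ)/p₀ x := by
      have := htrace x
      have := hle x
      linarith
    rw [div_le_div_iff₀ hp₁x hp₀x] at h1
    exact le_of_mul_le_mul_left (by linarith) hn0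
  -- rewrite the left-hand side
  have hF₁ : seqLevelFn s₁ T J K ℓ x / (ENNReal.ofReal c * lam)
      = ENNReal.ofReal (u x / c * w ^ (1/p₀ x - 1/p₁ x)) := by
    rw [seqLevelFn_eq s₁ T J K ℓ hxQ hsub, hT_eq, hclam_eq,
      ← ENNReal.ofReal_mul (by positivity), ← ENNReal.ofReal_div_of_pos (by positivity)]
    congr 1
    have hsplit : (2:ℝ)^((ℓ:ℝ)*(s₁ x + n/2))
        = (2:ℝ)^((ℓ:ℝ)*(s₀ x + n/2)) * (2:ℝ)^((ℓ:ℝ)*(s₁ x - s₀ x)) := by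
      rw [← Real.rpow_add two_pos]
      ring_nf
    have hexp_eq : (2:ℝ)^((ℓ:ℝ)*(s₁ x - s₀ x)) = w ^ (1/p₀ x - 1/p₁ x) := by
      have htr : s₁ x - s₀ x = (n:ℝ)/p₁ x - (n:ℝ)/p₀ x := by
        have := htrace x
        linarith
      rw [htr, hwdef, ← Real.rpow_mul (by norm_num : (0:ℝ) ≤ 2)]
      congr 1
      field_simp
      ring
    rw [hsplit, hexp_eq]
    simp only [hudef]
    field_simp
  rw [hF₁, hF₀ x hxQ]
  have hbase : 0 < u x / c * w ^ (1/p₀ x - 1/p₁ x) :=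
    mul_pos (div_pos (hu0 x) hc0) (Real.rpow_pos_of_pos hw0 _)
  rw [ENNReal.ofReal_rpow_of_pos hbase, ENNReal.ofReal_rpow_of_pos (hu0 x)]
  apply ENNReal.ofReal_le_ofReal
  exact thetaLemma hc1 hw0 hp₀x hq (hu0 x) hkey


/-- Sobolev-type embedding for sequence spaces. If
`s₁ ≤ s₀` and `s₀ − n/p₀ = s₁ − n/p₁` pointwise, then
`b^{s₀(·),φ}_{p₀(·),∞}(ℝⁿ) ↪ b^{s₁(·),φ}_{p₁(·),∞}(ℝⁿ)`. -/
theorem seqBesov_sobolev_embedding {n : ℕ}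
    (p₀ p₁ s₀ s₁ : EuclideanSpace ℝ (Fin n) → ℝ)
    (hp₀_meas : Measurable p₀) (hp₁_meas : Measurable p₁)
    (hs₀_meas : Measurable s₀) (hs₁_meas : Measurable s₁)
    (hp₀_log : GlobLogHolder p₀) (hp₁_log : GlobLogHolder p₁)
    (hp₀_minus : 0 < essInf p₀ (volume : Measure (EuclideanSpace ℝ (Fin n))))
    (hp₁_minus : 0 < essInf p₁ (volume : Measure (EuclideanSpace ℝ (Fin n))))
    (hs₀_log : ∃ C : ℝ, 0 < C ∧ LocLogHolderWith C s₀)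
    (hs₁_log : ∃ C : ℝ, 0 < C ∧ LocLogHolderWith C s₁)
    (hs₀_bdd : ∃ M : ℝ, ∀ x, |s₀ x| ≤ M) (hs₁_bdd : ∃ M : ℝ, ∀ x, |s₁ x| ≤ M)
    (φ : EuclideanSpace ℝ (Fin n) → ℝ → ℝ) (c₁ c₂ : ℝ) (hφ : IsGWeight φ c₁ c₂)
    (hle : ∀ x, s₁ x ≤ s₀ x)
    (htrace : ∀ x, s₀ x - n / p₀ x = s₁ x - n / p₁ x) :
    ∃ C : ℝ, 0 < C ∧ ∀ t : ℕ → (Fin n → ℤ) → ℂ,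
      seqBesovNormInf p₁ s₁ φ (fun ℓ k => (‖t ℓ k‖₊ : ℝ≥0∞))
        ≤ ENNReal.ofReal C * seqBesovNormInf p₀ s₀ φ (fun ℓ k => (‖t ℓ k‖₊ : ℝ≥0∞)) := by
  obtain ⟨⟨Cp, hCp, hp₀h⟩, -⟩ := hp₀_log
  obtain ⟨⟨Cp1, hCp1, hp₁h⟩, -⟩ := hp₁_log
  obtain ⟨Cs, hCs, hs₀h⟩ := hs₀_log
  obtain ⟨pm, hpm, hpm_ae⟩ := essInf_pos_ae hp₀_minus
  have hp₀lb : ∀ x, pm ≤ p₀ x :=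
    pointwise_lb_of_ae (continuous_of_locLogHolder hCp hp₀h) hpm_ae
  obtain ⟨pm1, hpm1, hpm1_ae⟩ := essInf_pos_ae hp₁_minus
  have hp₁lb : ∀ x, pm1 ≤ p₁ x :=
    pointwise_lb_of_ae (continuous_of_locLogHolder hCp1 hp₁h) hpm1_ae
  have hp₁pos : ∀ x, 0 < p₁ x := fun x => lt_of_lt_of_le hpm1 (hp₁lb x)
  have hp₀pos : ∀ x, 0 < p₀ x := fun x => lt_of_lt_of_le hpm (hp₀lb x)
  rcases Nat.eq_zero_or_pos n with hn0 | hn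
  · -- the degenerate case n = 0
    subst hn0
    refine ⟨1, one_pos, fun t => ?_⟩
    have hs : s₀ = s₁ := by
      funext x
      have h := htrace x
      simp only [Nat.cast_zero, zero_div, sub_zero] at h
      exact h
    have heq : seqBesovNormInf p₁ s₁ φ (fun ℓ k => (‖t ℓ k‖₊ : ℝ≥0∞))
        = seqBesovNormInf p₀ s₀ φ (fun ℓ k => (‖t ℓ k‖₊ : ℝ≥0∞)) := by
      rw [seqBesovNormInf, seqBesovNormInf, hs]
      refine iSup_congr fun J => iSup_congr fun K => ?_
      congr 1
      refine iSup_congr fun m => ?_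
      exact varNormR_zero_dim_eq p₁ p₀ (hp₁pos 0) (hp₀pos 0) _
    rw [heq, ENNReal.ofReal_one, one_mul]
  · -- the main case n ≥ 1
    obtain ⟨B, hB, hBlog'⟩ := logBound (D := max 1 (Real.sqrt n)) (le_max_left _ _)
    have hBlog : ∀ (ℓ : ℕ) (d : ℝ), 0 < d → d ≤ Real.sqrt n * (2:ℝ)^(-(ℓ:ℝ)) →
        (ℓ:ℝ) ≤ B * Real.log (Real.exp 1 + 1/d) := by
      intro ℓ d hd hdle
      apply hBlog' ℓ d hd
      calc d ≤ Real.sqrt n * (2:ℝ)^(-(ℓ:ℝ)) := hdle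
        _ ≤ max 1 (Real.sqrt n) * (2:ℝ)^(-(ℓ:ℝ)) :=
            mul_le_mul_of_nonneg_right (le_max_right _ _) (by positivity)
    have hκ1 : 1 ≤ (2:ℝ)^(Cs*B) := Real.one_le_rpow one_le_two (by positivity)
    have hκ₂1 : 1 ≤ (2:ℝ)^(Cp*B*((n:ℝ)/pm)) := Real.one_le_rpow one_le_two (by positivity)
    have hκ₂p : 1 ≤ ((2:ℝ)^(Cp*B*((n:ℝ)/pm)))^(1/pm) := Real.one_le_rpow hκ₂1 (by positivity)
    have hc1 : (1:ℝ) ≤ (2:ℝ)^(Cs*B) * ((2:ℝ)^(Cp*B*((n:ℝ)/pm)))^(1/pm) := by nlinarith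
    have hc0 : (0:ℝ) < (2:ℝ)^(Cs*B) * ((2:ℝ)^(Cp*B*((n:ℝ)/pm)))^(1/pm) :=
      lt_of_lt_of_le one_pos hc1
    refine ⟨(2:ℝ)^(Cs*B) * ((2:ℝ)^(Cp*B*((n:ℝ)/pm)))^(1/pm), hc0, fun t => ?_⟩
    set cE : ℝ≥0∞ := ENNReal.ofReal ((2:ℝ)^(Cs*B) * ((2:ℝ)^(Cp*B*((n:ℝ)/pm)))^(1/pm))
      with hcEdef
    set T : ℕ → (Fin n → ℤ) → ℝ≥0∞ := fun ℓ k => (‖t ℓ k‖₊ : ℝ≥0∞) with hTdef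
    have hT : ∀ ℓ k, T ℓ k ≠ ⊤ := fun ℓ k => ENNReal.coe_ne_top
    have hcE1 : 1 ≤ cE := by
      rw [hcEdef, ← ENNReal.ofReal_one]
      exact ENNReal.ofReal_le_ofReal hc1
    have hkey : ∀ (J : ℤ) (K : Fin n → ℤ) (m : ℕ),
        varNormR p₁ (seqLevelFn s₁ T J K ((max J 0).toNat + m))
          ≤ cE * varNormR p₀ (seqLevelFn s₀ T J K ((max J 0).toNat + m)) := by
      intro J K m
      apply varNorm_transfer p₀ p₁ _ _ cE hcE1 ENNReal.ofReal_ne_top hp₁pos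
      intro lam hlam hlamtop hmod
      exact core_modular hn p₀ p₁ s₀ s₁ pm Cs Cp B hpm hp₀lb hp₁pos hCs.le hCp.le hB
        hs₀h hp₀h hBlog hle htrace T hT J K _ lam hlam hlamtop hmod
    rw [seqBesovNormInf, seqBesovNormInf]
    refine iSup_le fun J => iSup_le fun K => ?_
    calc (ENNReal.ofReal (weightOn φ J K))⁻¹ *
          ⨆ m : ℕ, varNormR p₁ (seqLevelFn s₁ T J K ((max J 0).toNat + m))
        ≤ (ENNReal.ofReal (weightOn φ J K))⁻¹ *
          ⨆ m : ℕ, cE * varNormR p₀ (seqLevelFn s₀ T J K ((max J 0).toNat + m)) :=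
          mul_le_mul_right (iSup_mono fun m => hkey J K m) _
      _ = (ENNReal.ofReal (weightOn φ J K))⁻¹ *
          (cE * ⨆ m : ℕ, varNormR p₀ (seqLevelFn s₀ T J K ((max J 0).toNat + m))) := by
          simp only [ENNReal.mul_iSup]
      _ = cE * ((ENNReal.ofReal (weightOn φ J K))⁻¹ *
          ⨆ m : ℕ, varNormR p₀ (seqLevelFn s₀ T J K ((max J 0).toNat + m))) := by
          rw [mul_left_comm]
      _ ≤ cE * ⨆ (J' : ℤ) (K' : Fin n → ℤ), (ENNReal.ofReal (weightOn φ J' K'))⁻¹ *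
          ⨆ m : ℕ, varNormR p₀ (seqLevelFn s₀ T J' K' ((max J' 0).toNat + m)) := by
          refine mul_le_mul_right ?_ cE
          exact le_iSup_of_le J (le_iSup_of_le K le_rfl)
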